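/- Let q be any prime power and, for n ≥ 1, let Z_n be the number of monic polynomials f of degree n in F_q[x] with f(0) = 0 and with no repeated irreducible factors (i.e. f is squarefree). Then Z_1 = 1; if n ≥ 3 is odd, Z_n = (q^{n-1} - 1)(q - 1)/(q + 1); and if n ≥ 2 is even, Z_n = (q^{n-1} + 1)(q - 1)/(q + 1). -/
import Mathlib

open Polynomial UniqueFactorizationMonoid

set_option linter.unusedSectionVars false

section Aux

variable {K : Type*} [Field K] [Fintype K]

lemma my_finite_monic (K : Type*) [Field K] [Fintype K] (m : ℕ) : Finite {f : K[X] // f.Monic ∧ f.natDegree = m} := by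
  have : Finite (Polynomial.degreeLT K m) := by
    have e := Polynomial.degreeLTEquiv K m
    exact Finite.of_equiv _ e.toEquiv.symm
  exact Finite.of_equiv _ (Polynomial.monicEquivDegreeLT m).symm

lemma my_card_monic (K : Type*) [Field K] [Fintype K] (m : ℕ) :
    Nat.card {f : K[X] // f.Monic ∧ f.natDegree = m} = (Fintype.card K) ^ m := by
  have e := (Polynomial.monicEquivDegreeLT (R := K) m).trans (Polynomial.degreeLTEquiv K m).toEquiv
  rw [Nat.card_congr e]
  simp [Nat.card_eq_fintype_card]

lemma my_finite_monic_p (K : Type*) [Field K] [Fintype K] (m : ℕ) (P : K[X] → Prop) :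
    Finite {f : K[X] // f.Monic ∧ f.natDegree = m ∧ P f} := by
  have := my_finite_monic K m
  exact Finite.of_injective
    (fun x => (⟨x.1, x.2.1, x.2.2.1⟩ : {f : K[X] // f.Monic ∧ f.natDegree = m}))
    (by
      intro a b h
      have h2 := congrArg Subtype.val h
      exact Subtype.ext h2)

lemma my_exists_decomp : ∀ (N : ℕ) (f : K[X]), f.Monic → f.natDegree ≤ N →
    ∃ s d : K[X], s.Monic ∧ d.Monic ∧ Squarefree s ∧ f = s * d ^ 2 := by
  intro N
  induction N with
  | zero =>
    intro f hf hd
    refine ⟨f, 1, hf, monic_one, ?_, by ring⟩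
    have : f = 1 := hf.natDegree_eq_zero.mp (Nat.le_zero.mp hd)
    rw [this]; exact squarefree_one
  | succ N ih =>
    intro f hf hd
    by_cases hsf : Squarefree f
    · exact ⟨f, 1, hf, monic_one, hsf, by ring⟩
    · simp only [Squarefree, not_forall] at hsf
      obtain ⟨x, hxdvd, hxu⟩ := hsf
      have hf0 : f ≠ 0 := hf.ne_zero
      have hx0 : x ≠ 0 := by
        rintro rfl; simp at hxdvd; exact hf0 hxdvd
      -- monic scalar multiple of x
      set p := x * C x.leadingCoeff⁻¹ with hp
      have hpm : p.Monic := monic_mul_leadingCoeff_inv hx0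
      have hpdvd : p * p ∣ f := by
        have : p * p = (x * x) * C (x.leadingCoeff⁻¹ * x.leadingCoeff⁻¹) := by
          rw [hp]; simp [C_mul]; ring
        rw [this]
        have hu : IsUnit (C (x.leadingCoeff⁻¹ * x.leadingCoeff⁻¹)) := by
          refine isUnit_C.mpr (IsUnit.mul ?_ ?_) <;>
          · exact (isUnit_iff_ne_zero).mpr (inv_ne_zero (leadingCoeff_ne_zero.mpr hx0))
        exact (IsUnit.mul_right_dvd hu).mpr hxdvd
      obtain ⟨h, hfh⟩ := hpdvd
      have hp1 : 1 ≤ p.natDegree := by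
        rcases Nat.eq_zero_or_pos p.natDegree with h0 | h1
        · exfalso
          apply hxu
          have : p = 1 := hpm.natDegree_eq_zero.mp h0
          have : IsUnit p := this ▸ isUnit_one
          rw [hp] at this
          exact (isUnit_of_mul_isUnit_left this)
        · exact h1
      have hhm : h.Monic := (hpm.mul hpm).of_mul_monic_left (hfh ▸ hf)
      have hhd : h.natDegree ≤ N := by
        have := hf.natDegree_eq_zero
        have hdeg : f.natDegree = p.natDegree + p.natDegree + h.natDegree := by
          rw [hfh, (hpm.mul hpm).natDegree_mul hhm, hpm.natDegree_mul hpm]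
        omega
      obtain ⟨s, d, hsm, hdm, hssf, hsd⟩ := ih h hhm hhd
      exact ⟨s, p * d, hsm, hpm.mul hdm, hssf, by rw [hfh, hsd]; ring⟩


lemma my_uniq {s s' d d' : K[X]} (hs : s.Monic) (hs' : s'.Monic) (hd : d.Monic)
    (hd' : d'.Monic) (hsf : Squarefree s) (hsf' : Squarefree s')
    (h : s * d ^ 2 = s' * d' ^ 2) : s = s' ∧ d = d' := by
  classical
  have hs0 : s ≠ 0 := hs.ne_zero
  have hs'0 : s' ≠ 0 := hs'.ne_zero
  have hd0 : d ≠ 0 := hd.ne_zero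
  have hd'0 : d' ≠ 0 := hd'.ne_zero
  have key : ∀ p : K[X],
      (normalizedFactors s).count p + 2 * (normalizedFactors d).count p =
      (normalizedFactors s').count p + 2 * (normalizedFactors d').count p := by
    intro p
    have h1 : normalizedFactors (s * d ^ 2) = normalizedFactors s + 2 • normalizedFactors d := by
      rw [UniqueFactorizationMonoid.normalizedFactors_mul hs0 (pow_ne_zero 2 hd0),
        UniqueFactorizationMonoid.normalizedFactors_pow]
    have h2 : normalizedFactors (s' * d' ^ 2) =
        normalizedFactors s' + 2 • normalizedFactors d' := by
      rw [UniqueFactorizationMonoid.normalizedFactors_mul hs'0 (pow_ne_zero 2 hd'0),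
        UniqueFactorizationMonoid.normalizedFactors_pow]
    have := congrArg (Multiset.count p) (h1.symm.trans (by rw [h, h2]))
    simpa [Multiset.count_nsmul] using this
  have hns : (normalizedFactors s).Nodup :=
    (UniqueFactorizationMonoid.squarefree_iff_nodup_normalizedFactors hs0).mp hsf
  have hns' : (normalizedFactors s').Nodup :=
    (UniqueFactorizationMonoid.squarefree_iff_nodup_normalizedFactors hs'0).mp hsf'
  have hcs : ∀ p, (normalizedFactors s).count p ≤ 1 := Multiset.nodup_iff_count_le_one.mp hns
  have hcs' : ∀ p, (normalizedFactors s').count p ≤ 1 := Multiset.nodup_iff_count_le_one.mp hns'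
  have hfeq : normalizedFactors s = normalizedFactors s' := by
    ext p
    have := key p; have := hcs p; have := hcs' p; omega
  have hdeq : normalizedFactors d = normalizedFactors d' := by
    ext p
    have := key p; have := hcs p; have := hcs' p; omega
  constructor
  · exact eq_of_monic_of_associated hs hs'
      (((UniqueFactorizationMonoid.prod_normalizedFactors hs0).symm).trans
        (hfeq ▸ UniqueFactorizationMonoid.prod_normalizedFactors hs'0))
  · exact eq_of_monic_of_associated hd hd'
      (((UniqueFactorizationMonoid.prod_normalizedFactors hd0).symm).trans
        (hdeq ▸ UniqueFactorizationMonoid.prod_normalizedFactors hd'0))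

-- placeholders for already-proven lemmas
lemma my_count_identity (n : ℕ) :
    (Fintype.card K) ^ n = ∑ k ∈ Finset.range (n / 2 + 1),
      (Nat.card {f : K[X] // f.Monic ∧ f.natDegree = n - 2 * k ∧ Squarefree f})
        * (Fintype.card K) ^ k := by
  classical
  let SF : ℕ → Type _ := fun m => {f : K[X] // f.Monic ∧ f.natDegree = m ∧ Squarefree f}
  let M : ℕ → Type _ := fun m => {f : K[X] // f.Monic ∧ f.natDegree = m}
  have hk2 : ∀ k : Fin (n / 2 + 1), 2 * (k : ℕ) ≤ n := by
    intro k
    have : (k : ℕ) ≤ n / 2 := Nat.lt_succ_iff.mp k.isLt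
    omega
  let Φ : (Σ k : Fin (n / 2 + 1), SF (n - 2 * k) × M (k : ℕ)) → M n := fun x =>
    ⟨x.2.1.1 * x.2.2.1 ^ 2, (x.2.1.2.1).mul (x.2.2.2.1.pow 2), by
      rw [(x.2.1.2.1).natDegree_mul (x.2.2.2.1.pow 2), natDegree_pow,
        x.2.1.2.2.1, x.2.2.2.2]
      have := hk2 x.1
      omega⟩
  have hbij : Function.Bijective Φ := by
    constructor
    · rintro ⟨k, s, d⟩ ⟨k', s', d'⟩ h
      have heq : s.1 * d.1 ^ 2 = s'.1 * d'.1 ^ 2 := congrArg Subtype.val h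
      obtain ⟨hs, hd⟩ := my_uniq s.2.1 s'.2.1 d.2.1 d'.2.1 s.2.2.2 s'.2.2.2 heq
      have hkk : k = k' := by
        apply Fin.ext
        have h1 := d.2.2
        have h2 := d'.2.2
        rw [hd] at h1
        rw [h1] at h2
        exact h2
      subst hkk
      simp only [Sigma.mk.inj_iff, heq_eq_eq, Prod.mk.injEq, true_and]
      exact ⟨Subtype.ext hs, Subtype.ext hd⟩
    · rintro ⟨f, hf, hfd⟩
      obtain ⟨s, d, hsm, hdm, hssf, hsd⟩ := my_exists_decomp f.natDegree f hf le_rfl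
      have hdeg : n = s.natDegree + 2 * d.natDegree := by
        rw [← hfd, hsd, hsm.natDegree_mul (hdm.pow 2), natDegree_pow]
      have hkle : d.natDegree < n / 2 + 1 := by omega
      refine ⟨⟨⟨d.natDegree, hkle⟩, ⟨s, hsm, by simp only [Fin.val_mk]; omega, hssf⟩, ⟨d, hdm, rfl⟩⟩, ?_⟩
      exact Subtype.ext hsd.symm
  haveI instP : ∀ k : Fin (n / 2 + 1), Fintype (SF (n - 2 * k) × M (k : ℕ)) := by
    intro k
    haveI := my_finite_monic_p K (n - 2 * (k : ℕ)) Squarefree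
    haveI := my_finite_monic K (k : ℕ)
    exact Fintype.ofFinite _
  calc (Fintype.card K) ^ n
      = Nat.card (M n) := (my_card_monic K n).symm
    _ = Nat.card (Σ k : Fin (n / 2 + 1), SF (n - 2 * k) × M (k : ℕ)) :=
        (Nat.card_congr (Equiv.ofBijective Φ hbij)).symm
    _ = ∑ k : Fin (n / 2 + 1), Nat.card (SF (n - 2 * (k : ℕ))) * (Fintype.card K) ^ (k : ℕ) := by
        rw [Nat.card_eq_fintype_card, Fintype.card_sigma]
        refine Finset.sum_congr rfl fun k _ => ?_
        haveI := my_finite_monic_p K (n - 2 * (k : ℕ)) Squarefree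
        haveI := my_finite_monic K (k : ℕ)
        rw [← Nat.card_eq_fintype_card, Nat.card_prod, my_card_monic K (k : ℕ)]
    _ = ∑ k ∈ Finset.range (n / 2 + 1),
          Nat.card (SF (n - 2 * k)) * (Fintype.card K) ^ k :=
        Fin.sum_univ_eq_sum_range (fun k => Nat.card (SF (n - 2 * k)) * (Fintype.card K) ^ k) _

lemma my_S_one :
    Nat.card {f : K[X] // f.Monic ∧ f.natDegree = 1 ∧ Squarefree f} = Fintype.card K := by
  have h := my_count_identity (K := K) 1
  simpa using h.symm

lemma my_S_ge_two (m : ℕ) (hm : 2 ≤ m) :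
    Nat.card {f : K[X] // f.Monic ∧ f.natDegree = m ∧ Squarefree f}
      + (Fintype.card K) ^ (m - 1) = (Fintype.card K) ^ m := by
  have h := my_count_identity (K := K) m
  have h2 := my_count_identity (K := K) (m - 2)
  have hdiv : m / 2 = (m - 2) / 2 + 1 := by omega
  rw [hdiv] at h
  rw [Finset.sum_range_succ'] at h
  simp only [pow_zero, mul_one, Nat.mul_zero, Nat.sub_zero] at h
  have hsum : ∑ k ∈ Finset.range ((m - 2) / 2 + 1),
      (Nat.card {f : K[X] // f.Monic ∧ f.natDegree = m - 2 * (k + 1) ∧ Squarefree f})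
        * (Fintype.card K) ^ (k + 1)
      = (Fintype.card K) * ∑ k ∈ Finset.range ((m - 2) / 2 + 1),
      (Nat.card {f : K[X] // f.Monic ∧ f.natDegree = (m - 2) - 2 * k ∧ Squarefree f})
        * (Fintype.card K) ^ k := by
    rw [Finset.mul_sum]
    refine Finset.sum_congr rfl fun k _ => ?_
    have : m - 2 * (k + 1) = (m - 2) - 2 * k := by omega
    rw [this, pow_succ]
    ring
  rw [hsum, ← h2] at h
  have hpow : (Fintype.card K) * (Fintype.card K) ^ (m - 2) = (Fintype.card K) ^ (m - 1) := by
    rw [← pow_succ']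
    congr 1
    omega
  rw [hpow] at h
  omega

lemma my_card_Z (m : ℕ) :
    Nat.card {f : K[X] // f.Monic ∧ f.natDegree = m + 1 ∧ f.coeff 0 = 0 ∧ Squarefree f}
      = Nat.card {g : K[X] // g.Monic ∧ g.natDegree = m ∧ g.coeff 0 ≠ 0 ∧ Squarefree g} := by
  apply Nat.card_congr
  apply Equiv.symm
  refine Equiv.ofBijective (fun g => ⟨X * g.1, ?_, ?_, ?_, ?_⟩) ⟨?_, ?_⟩
  · exact monic_X.mul g.2.1
  · rw [monic_X.natDegree_mul g.2.1, natDegree_X, g.2.2.1, add_comm]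
  · rw [mul_coeff_zero, coeff_X_zero, zero_mul]
  · rw [squarefree_mul_iff]
    refine ⟨?_, prime_X.squarefree, g.2.2.2.2⟩
    exact ((prime_X.coprime_iff_not_dvd).mpr (fun hdvd => g.2.2.2.1 (X_dvd_iff.mp hdvd))).isRelPrime
  · intro a b h
    have h2 : X * a.1 = X * b.1 := congrArg Subtype.val h
    exact Subtype.ext (mul_left_cancel₀ X_ne_zero h2)
  · rintro ⟨f, hfm, hfd, hf0, hfsf⟩
    obtain ⟨g, hg⟩ := X_dvd_iff.mpr hf0
    have hgm : g.Monic := monic_X.of_mul_monic_left (hg ▸ hfm)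
    have hgd : g.natDegree = m := by
      have : f.natDegree = 1 + g.natDegree := by
        rw [hg, monic_X.natDegree_mul hgm, natDegree_X]
      omega
    have hg0 : g.coeff 0 ≠ 0 := by
      intro h0
      obtain ⟨g', hg'⟩ := X_dvd_iff.mpr h0
      have : X * X ∣ f := ⟨g', by rw [hg, hg']; ring⟩
      exact not_isUnit_X (hfsf X this)
    have hgsf : Squarefree g := hfsf.squarefree_of_dvd ⟨X, by rw [hg]; ring⟩
    exact ⟨⟨g, hgm, hgd, hg0, hgsf⟩, Subtype.ext hg.symm⟩

lemma my_S_split (m : ℕ) :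
    Nat.card {f : K[X] // f.Monic ∧ f.natDegree = m ∧ Squarefree f}
      = Nat.card {f : K[X] // f.Monic ∧ f.natDegree = m ∧ f.coeff 0 = 0 ∧ Squarefree f}
        + Nat.card {f : K[X] // f.Monic ∧ f.natDegree = m ∧ f.coeff 0 ≠ 0 ∧ Squarefree f} := by
  classical
  haveI := my_finite_monic_p K m Squarefree
  haveI := my_finite_monic_p K m (fun f => f.coeff 0 = 0 ∧ Squarefree f)
  haveI := my_finite_monic_p K m (fun f => f.coeff 0 ≠ 0 ∧ Squarefree f)
  have e1 : {x : {f : K[X] // f.Monic ∧ f.natDegree = m ∧ Squarefree f} // x.1.coeff 0 = 0} ≃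
      {f : K[X] // f.Monic ∧ f.natDegree = m ∧ f.coeff 0 = 0 ∧ Squarefree f} :=
    ⟨fun x => ⟨x.1.1, x.1.2.1, x.1.2.2.1, x.2, x.1.2.2.2⟩,
     fun f => ⟨⟨f.1, f.2.1, f.2.2.1, f.2.2.2.2⟩, f.2.2.2.1⟩,
     fun x => rfl, fun f => rfl⟩
  have e2 : {x : {f : K[X] // f.Monic ∧ f.natDegree = m ∧ Squarefree f} // ¬(x.1.coeff 0 = 0)} ≃
      {f : K[X] // f.Monic ∧ f.natDegree = m ∧ f.coeff 0 ≠ 0 ∧ Squarefree f} :=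
    ⟨fun x => ⟨x.1.1, x.1.2.1, x.1.2.2.1, x.2, x.1.2.2.2⟩,
     fun f => ⟨⟨f.1, f.2.1, f.2.2.1, f.2.2.2.2⟩, f.2.2.2.1⟩,
     fun x => rfl, fun f => rfl⟩
  have e0 := (Equiv.sumCompl (fun x : {f : K[X] // f.Monic ∧ f.natDegree = m ∧ Squarefree f} =>
    x.1.coeff 0 = 0)).symm
  rw [Nat.card_congr (e0.trans (Equiv.sumCongr e1 e2)), Nat.card_sum]

lemma my_T_zero :
    Nat.card {f : K[X] // f.Monic ∧ f.natDegree = 0 ∧ f.coeff 0 ≠ 0 ∧ Squarefree f} = 1 := by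
  haveI : Unique {f : K[X] // f.Monic ∧ f.natDegree = 0 ∧ f.coeff 0 ≠ 0 ∧ Squarefree f} := by
    refine ⟨⟨⟨1, monic_one, natDegree_one, by simp, squarefree_one⟩⟩, ?_⟩
    intro x
    exact Subtype.ext (x.2.1.natDegree_eq_zero.mp x.2.2.1)
  exact Nat.card_unique

lemma my_T_formula (m : ℕ) (hm : 1 ≤ m) :
    (Nat.card {g : K[X] // g.Monic ∧ g.natDegree = m ∧ g.coeff 0 ≠ 0 ∧ Squarefree g} : ℤ)
      * ((Fintype.card K : ℤ) + 1)
      = ((Fintype.card K : ℤ) ^ m - (-1) ^ m) * ((Fintype.card K : ℤ) - 1) := by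
  induction m, hm using Nat.le_induction with
  | base =>
    have h1 := my_S_split (K := K) 1
    rw [my_S_one, my_card_Z (K := K) 0, my_T_zero] at h1
    have : (Nat.card {g : K[X] // g.Monic ∧ g.natDegree = 1 ∧ g.coeff 0 ≠ 0 ∧ Squarefree g} : ℤ)
        = (Fintype.card K : ℤ) - 1 := by
      have := congrArg (Nat.cast (R := ℤ)) h1
      push_cast at this
      linarith
    rw [this]
    ring
  | succ m hm ih =>
    have hs := my_S_split (K := K) (m + 1)
    rw [my_card_Z (K := K) m] at hs
    have hS := my_S_ge_two (K := K) (m + 1) (by omega)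
    have hSc := congrArg (Nat.cast (R := ℤ)) hs
    have hSc2 := congrArg (Nat.cast (R := ℤ)) hS
    push_cast at hSc hSc2
    have hneg : ((-1 : ℤ)) ^ (m + 1) = -(-1 : ℤ) ^ m := by ring
    rw [hneg]
    linear_combination (-1 : ℤ) * ih - ((Fintype.card K : ℤ) + 1) * hSc + ((Fintype.card K : ℤ) + 1) * hSc2

end Aux

/-- Let `q` be a prime power and, for `n ≥ 1`, let `Z_n` be the number of
monic squarefree polynomials `f` of degree `n` over `F_q` with `f(0) = 0`.  Then
`Z_1 = 1`; `Z_n = (q^{n-1} - 1)(q - 1)/(q + 1)` for odd `n ≥ 3`; and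
`Z_n = (q^{n-1} + 1)(q - 1)/(q + 1)` for even `n ≥ 2`. -/
theorem stmt_5 (Fq : Type*) [Field Fq] [Fintype Fq] (q : ℕ) (hq : Fintype.card Fq = q)
    (n : ℕ) (Z : ℕ)
    (hZ : Z = Nat.card {f : Polynomial Fq //
        f.Monic ∧ f.natDegree = n ∧ f.coeff 0 = 0 ∧ Squarefree f}) :
    (n = 1 → Z = 1) ∧
    (3 ≤ n → Odd n → Z * (q + 1) = (q ^ (n - 1) - 1) * (q - 1)) ∧
    (2 ≤ n → Even n → Z * (q + 1) = (q ^ (n - 1) + 1) * (q - 1)) := by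
  subst hq
  have hq2 : 2 ≤ Fintype.card Fq := Fintype.one_lt_card
  refine ⟨?_, ?_, ?_⟩
  · rintro rfl
    rw [hZ, my_card_Z (K := Fq) 0, my_T_zero]
  · intro hn hodd
    have hn1 : n - 1 + 1 = n := by omega
    have hZT : Z = Nat.card {g : Polynomial Fq //
        g.Monic ∧ g.natDegree = n - 1 ∧ g.coeff 0 ≠ 0 ∧ Squarefree g} := by
      rw [hZ, ← my_card_Z (K := Fq) (n - 1), hn1]
    have hT := my_T_formula (K := Fq) (n - 1) (by omega)
    have heven : Even (n - 1) := Nat.Odd.sub_odd hodd odd_one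
    rw [heven.neg_one_pow] at hT
    rw [← hZT] at hT
    have h1 : 1 ≤ Fintype.card Fq ^ (n - 1) := Nat.one_le_pow _ _ (by omega)
    have : ((Z * (Fintype.card Fq + 1) : ℕ) : ℤ)
        = (((Fintype.card Fq ^ (n - 1) - 1) * (Fintype.card Fq - 1) : ℕ) : ℤ) := by
      push_cast [Nat.cast_sub h1, Nat.cast_sub (by omega : 1 ≤ Fintype.card Fq)]
      linarith [hT]
    exact_mod_cast this
  · intro hn heven
    have hn1 : n - 1 + 1 = n := by omega
    have hZT : Z = Nat.card {g : Polynomial Fq //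
        g.Monic ∧ g.natDegree = n - 1 ∧ g.coeff 0 ≠ 0 ∧ Squarefree g} := by
      rw [hZ, ← my_card_Z (K := Fq) (n - 1), hn1]
    have hT := my_T_formula (K := Fq) (n - 1) (by omega)
    have hodd : Odd (n - 1) := Nat.Even.sub_odd (by omega) heven odd_one
    rw [hodd.neg_one_pow] at hT
    rw [← hZT] at hT
    have : ((Z * (Fintype.card Fq + 1) : ℕ) : ℤ)
        = (((Fintype.card Fq ^ (n - 1) + 1) * (Fintype.card Fq - 1) : ℕ) : ℤ) := by
      push_cast [Nat.cast_sub (by omega : 1 ≤ Fintype.card Fq)]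
      linarith [hT]
    exact_mod_cast this
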